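/- arXiv:math/0312242 — 3 statements merged into one kernel-verified Lean document; each statement's English description precedes it below -/
import Mathlib

section
/- Let f : V → ℝ be a function on the vertices of a graph whose coboundary δf is ℓ^p-summable on the edge set for some p ∈ [1, ∞). Then for every ε > 0 there exists a bounded function g : V → ℝ (i.e. g ∈ ℓ^∞(V)) such that ‖δf - δg‖_p < ε. In particular δg is ℓ^p-summable. -/
open Finset

/-- clamp to `[-M, M]` -/
private def clampR (M t : ℝ) : ℝ := min M (max (-M) t)

private lemma clampR_mono (M : ℝ) : Monotone (clampR M) := fun a b h => by
  unfold clampR; exact min_le_min le_rfl (max_le_max le_rfl h)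

private lemma clampR_sub_le {M a b : ℝ} (h : a ≤ b) :
    clampR M b - clampR M a ≤ b - a := by
  unfold clampR
  simp only [min_def, max_def]
  split_ifs <;> linarith

private lemma clampR_lip (M a b : ℝ) : |clampR M a - clampR M b| ≤ |a - b| := by
  rcases le_total a b with h | h
  · rw [abs_sub_comm, abs_sub_comm a b]
    rw [abs_of_nonneg (sub_nonneg.2 (clampR_mono M h)), abs_of_nonneg (sub_nonneg.2 h)]
    exact clampR_sub_le h
  · rw [abs_of_nonneg (sub_nonneg.2 (clampR_mono M h)), abs_of_nonneg (sub_nonneg.2 h)]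
    exact clampR_sub_le h

private lemma resid_lip (M a b : ℝ) :
    |(a - clampR M a) - (b - clampR M b)| ≤ |a - b| := by
  rcases le_total a b with h | h
  · rw [abs_sub_comm, abs_sub_comm a b, abs_of_nonneg (sub_nonneg.2 h)]
    have h1 := clampR_mono M h
    have h2 := clampR_sub_le (M := M) h
    rw [abs_le]; constructor <;> linarith
  · rw [abs_of_nonneg (sub_nonneg.2 h)]
    have h1 := clampR_mono M h
    have h2 := clampR_sub_le (M := M) h
    rw [abs_le]; constructor <;> linarith

/-- Theorem 1, real case: if `f : V → ℝ` has ℓ^p-summable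
coboundary `δf(e) = f (x e) - f (x' e)` on the edge set `E` for some `p ∈ [1, ∞)`,
then for every `ε > 0` there is a bounded function `g : V → ℝ` with
`‖δf - δg‖_p < ε`; in particular `δg` is ℓ^p-summable. -/
theorem approx_coboundary_real (V E : Type*) (x x' : E → V) (f : V → ℝ)
    (p : ℝ) (hp : 1 ≤ p)
    (hf : Summable (fun e => |f (x e) - f (x' e)| ^ p)) :
    ∀ ε > (0 : ℝ), ∃ g : V → ℝ, (∃ C : ℝ, ∀ v, |g v| ≤ C) ∧
      Summable (fun e =>
        |(f (x e) - f (x' e)) - (g (x e) - g (x' e))| ^ p) ∧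
      (∑' e, |(f (x e) - f (x' e)) - (g (x e) - g (x' e))| ^ p) ^ (1 / p) < ε ∧
      Summable (fun e => |g (x e) - g (x' e)| ^ p) := by
  intro ε hε
  classical
  have hp0 : (0:ℝ) < p := lt_of_lt_of_le one_pos hp
  have hεp : (0:ℝ) < ε ^ p := Real.rpow_pos_of_pos hε p
  obtain ⟨F, hF⟩ : ∃ F : Finset E,
      ∑' e : {e // e ∉ F}, |f (x e) - f (x' e)| ^ p < ε ^ p := by
    have h := tendsto_tsum_compl_atTop_zero (fun e => |f (x e) - f (x' e)| ^ p)
    have := (h.eventually (gt_mem_nhds hεp)).exists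
    obtain ⟨F, hF⟩ := this
    exact ⟨F, hF⟩
  set S : Finset V := F.image x ∪ F.image x' with hS
  set M : ℝ := ∑ v ∈ S, |f v| with hM
  have hM0 : 0 ≤ M := Finset.sum_nonneg fun v _ => abs_nonneg _
  set g : V → ℝ := fun v => clampR M (f v) with hg
  have hgf : ∀ v ∈ S, g v = f v := by
    intro v hv
    have hle : |f v| ≤ M := Finset.single_le_sum (fun w _ => abs_nonneg (f w)) hv
    rw [abs_le] at hle
    simp only [hg, clampR]
    rw [max_eq_right hle.1, min_eq_right hle.2]
  -- difference dominated
  have hdom : ∀ e, |(f (x e) - f (x' e)) - (g (x e) - g (x' e))| ^ p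
      ≤ |f (x e) - f (x' e)| ^ p := by
    intro e
    apply Real.rpow_le_rpow (abs_nonneg _) _ hp0.le
    have := resid_lip M (f (x e)) (f (x' e))
    calc |(f (x e) - f (x' e)) - (g (x e) - g (x' e))|
        = |(f (x e) - clampR M (f (x e))) - (f (x' e) - clampR M (f (x' e)))| := by
          simp only [hg]; ring_nf
      _ ≤ |f (x e) - f (x' e)| := this
  have hdomg : ∀ e, |g (x e) - g (x' e)| ^ p ≤ |f (x e) - f (x' e)| ^ p := by
    intro e
    exact Real.rpow_le_rpow (abs_nonneg _) (clampR_lip M _ _) hp0.le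
  have hsum1 : Summable (fun e =>
      |(f (x e) - f (x' e)) - (g (x e) - g (x' e))| ^ p) :=
    Summable.of_nonneg_of_le (fun e => Real.rpow_nonneg (abs_nonneg _) p) hdom hf
  have hsumg : Summable (fun e => |g (x e) - g (x' e)| ^ p) :=
    Summable.of_nonneg_of_le (fun e => Real.rpow_nonneg (abs_nonneg _) p) hdomg hf
  refine ⟨g, ⟨M, fun v => ?_⟩, hsum1, ?_, hsumg⟩
  · simp only [hg, clampR]
    rw [abs_le]
    exact ⟨le_min (by linarith) (le_max_left _ _), min_le_left _ _⟩
  · -- main estimate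
    set d : E → ℝ := fun e => |(f (x e) - f (x' e)) - (g (x e) - g (x' e))| ^ p with hd
    have hd0 : ∀ e ∈ F, d e = 0 := by
      intro e he
      have h1 : g (x e) = f (x e) := hgf _ (Finset.mem_union_left _ (Finset.mem_image_of_mem x he))
      have h2 : g (x' e) = f (x' e) := hgf _ (Finset.mem_union_right _ (Finset.mem_image_of_mem x' he))
      simp [hd, h1, h2, Real.zero_rpow hp0.ne']
    have hsupp : Function.support d ⊆ {e | e ∉ F} := by
      intro e he
      simp only [Set.mem_setOf_eq]
      intro hmem
      exact he (hd0 e hmem)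
    have heq : ∑' e, d e = ∑' e : {e // e ∉ F}, d e :=
      (tsum_subtype_eq_of_support_subset hsupp).symm
    have hle : ∑' e : {e // e ∉ F}, d e ≤ ∑' e : {e // e ∉ F}, |f (x e) - f (x' e)| ^ p :=
      Summable.tsum_le_tsum (fun e => hdom e) (hsum1.subtype _) (hf.subtype _)
    have hlt : ∑' e, d e < ε ^ p := by
      rw [heq]; exact lt_of_le_of_lt hle hF
    have hnn : 0 ≤ ∑' e, d e := tsum_nonneg fun e => Real.rpow_nonneg (abs_nonneg _) p
    have : (∑' e, d e) ^ (1/p) < (ε ^ p) ^ (1/p) :=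
      Real.rpow_lt_rpow hnn hlt (by positivity)
    rwa [← Real.rpow_mul hε.le, mul_one_div_cancel hp0.ne', Real.rpow_one] at this
end

section
/- Let f : V → ℂ be a complex-valued function on the vertices of a graph whose coboundary δf is ℓ^p-summable on the edges for some p ∈ [1, ∞). Then for every ε > 0 there exists a bounded function g : V → ℂ such that ‖δf - δg‖_p < ε. -/
open Filter Topology

/-- Real truncation at level `M`. -/
noncomputable def trunc (M t : ℝ) : ℝ := max (-M) (min M t)

lemma trunc_lip (M a b : ℝ) : |trunc M a - trunc M b| ≤ |a - b| := by
  unfold trunc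
  calc |max (-M) (min M a) - max (-M) (min M b)|
      ≤ max |(-M) - (-M)| |min M a - min M b| := abs_max_sub_max_le_max _ _ _ _
    _ ≤ max |(-M) - (-M)| (max |M - M| |a - b|) := by
        exact max_le_max le_rfl (abs_min_sub_min_le_max _ _ _ _)
    _ ≤ |a - b| := by simp [abs_nonneg]

lemma trunc_abs_le (M t : ℝ) (hM : 0 ≤ M) : |trunc M t| ≤ M := by
  unfold trunc
  rw [abs_le]
  constructor
  · exact le_max_left _ _
  · exact max_le (by linarith) (le_trans (min_le_left _ _) le_rfl)

lemma trunc_eq (M t : ℝ) (h : |t| ≤ M) : trunc M t = t := by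
  rw [abs_le] at h
  unfold trunc
  rw [min_eq_right h.2, max_eq_right h.1]

/-- Complex truncation. -/
noncomputable def ctrunc (M : ℝ) (z : ℂ) : ℂ :=
  ⟨trunc M z.re, trunc M z.im⟩

lemma ctrunc_norm_le (M : ℝ) (hM : 0 ≤ M) (z : ℂ) : ‖ctrunc M z‖ ≤ 2 * M := by
  calc ‖ctrunc M z‖ ≤ |(ctrunc M z).re| + |(ctrunc M z).im| :=
        Complex.norm_le_abs_re_add_abs_im _
    _ ≤ M + M := add_le_add (trunc_abs_le _ _ hM) (trunc_abs_le _ _ hM)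
    _ = 2 * M := by ring

lemma ctrunc_sub_le (M : ℝ) (z w : ℂ) : ‖ctrunc M z - ctrunc M w‖ ≤ 2 * ‖z - w‖ := by
  have h1 : ‖ctrunc M z - ctrunc M w‖ ≤ |trunc M z.re - trunc M w.re| +
      |trunc M z.im - trunc M w.im| := by
    have := Complex.norm_le_abs_re_add_abs_im (ctrunc M z - ctrunc M w)
    simpa [ctrunc, Complex.sub_re, Complex.sub_im] using this
  have h2 := (trunc_lip M z.re w.re).trans (by
    simpa using Complex.abs_re_le_norm (z - w))
  have h3 := (trunc_lip M z.im w.im).trans (by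
    simpa using Complex.abs_im_le_norm (z - w))
  calc ‖ctrunc M z - ctrunc M w‖ ≤ _ + _ := h1
    _ ≤ ‖z - w‖ + ‖z - w‖ := add_le_add h2 h3
    _ = 2 * ‖z - w‖ := by ring

lemma ctrunc_eq (M : ℝ) (z : ℂ) (h : ‖z‖ ≤ M) : ctrunc M z = z := by
  have hre : |z.re| ≤ M := le_trans (Complex.abs_re_le_norm z) h
  have him : |z.im| ≤ M := le_trans (Complex.abs_im_le_norm z) h
  simp [ctrunc, trunc_eq _ _ hre, trunc_eq _ _ him, Complex.ext_iff]

/-- Theorem 1, complex case: if `f : V → ℂ` has ℓ^p-summable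
coboundary `δf(e) = f (x e) - f (x' e)` on the edges for some `p ∈ [1, ∞)`, then
for every `ε > 0` there is a bounded function `g : V → ℂ` with `‖δf - δg‖_p < ε`. -/
theorem approx_coboundary_complex (V E : Type*) (x x' : E → V) (f : V → ℂ)
    (p : ℝ) (hp : 1 ≤ p)
    (hf : Summable (fun e => ‖f (x e) - f (x' e)‖ ^ p)) :
    ∀ ε > (0 : ℝ), ∃ g : V → ℂ, (∃ C : ℝ, ∀ v, ‖g v‖ ≤ C) ∧
      Summable (fun e =>
        ‖(f (x e) - f (x' e)) - (g (x e) - g (x' e))‖ ^ p) ∧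
      (∑' e, ‖(f (x e) - f (x' e)) - (g (x e) - g (x' e))‖ ^ p) ^ (1 / p) < ε := by
  intro ε hε
  have hp0 : 0 < p := lt_of_lt_of_le one_pos hp
  -- family of truncated functions indexed by n : ℕ
  set g : ℕ → V → ℂ := fun n v => ctrunc (n : ℝ) (f v) with hg
  -- the error terms
  set h : ℕ → E → ℝ := fun n e =>
    ‖(f (x e) - f (x' e)) - (g n (x e) - g n (x' e))‖ ^ p with hh
  -- domination
  have hbound : ∀ n e, ‖h n e‖ ≤ (3 : ℝ) ^ p * ‖f (x e) - f (x' e)‖ ^ p := by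
    intro n e
    have h1 : ‖(f (x e) - f (x' e)) - (g n (x e) - g n (x' e))‖ ≤
        3 * ‖f (x e) - f (x' e)‖ := by
      calc ‖(f (x e) - f (x' e)) - (g n (x e) - g n (x' e))‖
          ≤ ‖f (x e) - f (x' e)‖ + ‖g n (x e) - g n (x' e)‖ := norm_sub_le _ _
        _ ≤ ‖f (x e) - f (x' e)‖ + 2 * ‖f (x e) - f (x' e)‖ :=
            add_le_add le_rfl (ctrunc_sub_le _ _ _)
        _ = 3 * ‖f (x e) - f (x' e)‖ := by ring
    have h2 : ‖(f (x e) - f (x' e)) - (g n (x e) - g n (x' e))‖ ^ p ≤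
        (3 * ‖f (x e) - f (x' e)‖) ^ p :=
      Real.rpow_le_rpow (norm_nonneg _) h1 hp0.le
    rw [Real.norm_of_nonneg (Real.rpow_nonneg (norm_nonneg _) _)]
    calc h n e ≤ (3 * ‖f (x e) - f (x' e)‖) ^ p := h2
      _ = (3 : ℝ) ^ p * ‖f (x e) - f (x' e)‖ ^ p :=
          Real.mul_rpow (by norm_num) (norm_nonneg _)
  have hbsum : Summable (fun e => (3 : ℝ) ^ p * ‖f (x e) - f (x' e)‖ ^ p) :=
    hf.mul_left _
  -- pointwise convergence to 0
  have hptw : ∀ e, Tendsto (fun n => h n e) atTop (𝓝 0) := by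
    intro e
    have : ∀ᶠ n : ℕ in atTop, h n e = 0 := by
      obtain ⟨N, hN⟩ := exists_nat_ge (max ‖f (x e)‖ ‖f (x' e)‖)
      filter_upwards [eventually_ge_atTop N] with n hn
      have hn' : (N : ℝ) ≤ (n : ℝ) := Nat.cast_le.2 hn
      have e1 : g n (x e) = f (x e) :=
        ctrunc_eq _ _ (le_trans (le_trans (le_max_left _ _) hN) hn')
      have e2 : g n (x' e) = f (x' e) :=
        ctrunc_eq _ _ (le_trans (le_trans (le_max_right _ _) hN) hn')
      simp [hh, e1, e2, Real.zero_rpow hp0.ne']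
    exact Tendsto.congr' (this.mono fun n hn => hn.symm) tendsto_const_nhds
  -- summability of each h n
  have hsumm : ∀ n, Summable (h n) := fun n =>
    hbsum.of_norm_bounded (hbound n)
  -- dominated convergence
  have hmain : Tendsto (fun n => ∑' e, h n e) atTop (𝓝 (∑' e : E, (0 : ℝ))) :=
    tendsto_tsum_of_dominated_convergence hbsum hptw
      (Eventually.of_forall (fun n e => hbound n e))
  rw [tsum_zero] at hmain
  -- choose n with tsum < ε ^ p
  have hεp : (0 : ℝ) < ε ^ p := Real.rpow_pos_of_pos hε _
  obtain ⟨n, hn⟩ := (hmain.eventually (eventually_lt_nhds hεp)).exists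
  refine ⟨g n, ⟨2 * n, fun v => ctrunc_norm_le _ (Nat.cast_nonneg n) _⟩, hsumm n, ?_⟩
  have htnn : 0 ≤ ∑' e, h n e := tsum_nonneg fun e => Real.rpow_nonneg (norm_nonneg _) _
  calc (∑' e, h n e) ^ (1 / p) < (ε ^ p) ^ (1 / p) :=
        Real.rpow_lt_rpow htnn hn (by positivity)
    _ = ε := by
        rw [one_div, Real.rpow_rpow_inv hε.le hp0.ne']
end

section
/- Let G be a discrete group, f ∈ ℓ^∞(G), and g ∈ G. If ρ_g(f) - f ∈ ℓ²(G), then the commutator [m_f, J λ_g J] is a Hilbert–Schmidt operator on ℓ²(G). -/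
set_option maxHeartbeats 1000000
noncomputable section

/-- `ℓ²(G)` with complex coefficients. -/
abbrev l2 (G : Type*) := lp (fun _ : G => ℂ) 2

/-- A bounded operator on `ℓ²(G)` is Hilbert–Schmidt if the sum of `‖T δ_g‖²`
over the standard orthonormal basis `(δ_g)` is finite. -/
def IsHS {G : Type*} [DecidableEq G] (T : l2 G →L[ℂ] l2 G) : Prop :=
  Summable (fun g : G => ‖T (lp.single 2 g (1 : ℂ))‖ ^ 2)

/-- for `f ∈ ℓ^∞(G)` and `g ∈ G` with `ρ_g(f) - f ∈ ℓ²(G)`, the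
commutator `[m_f, J λ_g J]` is Hilbert–Schmidt on `ℓ²(G)`.  Here `M` is the
multiplication operator by `f` and `R = J λ_g J` acts by `(R ξ)(h) = ξ(h g)`. -/
theorem commutator_hilbertSchmidt (G : Type*) [Group G] [DecidableEq G]
    (f : G → ℂ) (hf : ∃ C : ℝ, ∀ h, ‖f h‖ ≤ C) (g : G)
    (hδ : Memℓp (fun h : G => f (h * g) - f h) 2)
    (M R : l2 G →L[ℂ] l2 G)
    (hM : ∀ (ξ : l2 G) (h : G), M ξ h = f h * ξ h)
    (hR : ∀ (ξ : l2 G) (h : G), R ξ h = ξ (h * g)) :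
    IsHS (M ∘L R - R ∘L M) := by
  set F : G → ℂ := fun h => f h - f (h * g) with hF
  have key : ∀ k : G, (M ∘L R - R ∘L M) (lp.single 2 k (1 : ℂ)) =
      lp.single 2 (k * g⁻¹) (F (k * g⁻¹)) := by
    intro k
    apply lp.ext
    funext h
    have h1 : ((M ∘L R - R ∘L M) (lp.single 2 k (1 : ℂ))) h
        = M (R (lp.single 2 k 1)) h - R (M (lp.single 2 k 1)) h := by
      rw [ContinuousLinearMap.sub_apply, lp.coeFn_sub]
      rfl
    rw [h1, hM, hR, hR, hM]
    by_cases hk : h * g = k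
    · have hk' : h = k * g⁻¹ := by rw [← hk]; group
      have hk'' : k * g⁻¹ * g = k := by group
      rw [hk, hk', lp.single_apply_self, lp.single_apply_self, hF]
      simp [hk'']
    · have hk' : h ≠ k * g⁻¹ := by
        intro hc; exact hk (by rw [hc]; group)
      rw [lp.single_apply_ne 2 k _ hk, lp.single_apply_ne 2 (k * g⁻¹) _ hk']
      ring
  have hnorm : ∀ k : G, ‖(M ∘L R - R ∘L M) (lp.single 2 k (1 : ℂ))‖ = ‖F (k * g⁻¹)‖ := by
    intro k
    rw [key k]
    exact lp.norm_single (E := fun _ : G => ℂ) (p := 2) (by norm_num) (k * g⁻¹) (F (k * g⁻¹))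
  simp only [IsHS, hnorm]
  have hsum : Summable fun h : G => ‖f (h * g) - f h‖ ^ (2 : ENNReal).toReal :=
    (memℓp_gen_iff (by norm_num)).mp hδ
  have hsum2 : Summable fun h : G => ‖F h‖ ^ 2 := by
    have : (2 : ENNReal).toReal = ((2 : ℕ) : ℝ) := by norm_num
    rw [this] at hsum
    simp only [Real.rpow_natCast] at hsum
    convert hsum using 2 with h
    rw [hF]
    simp [norm_sub_rev]
  exact (Equiv.mulRight g⁻¹).summable_iff.mpr hsum2
end
end
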